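/- Let n ≥ 4, let C be a totally traceless generalized curvature tensor on Minkowski space ℝ^n, let u be a unit timelike vector such that C is Weyl compatible with u, and let Γ be the associated tensor built from C, its electric part E, u and η. Then Γ² = C² − 4·((n−2)/(n−3))·E², where T² denotes the full η-self-contraction of a tensor T. -/
import Mathlib


open Finset

noncomputable section

/-- A 4-argument real tensor on `ℝ^n`. -/
abbrev Tensor4 (n : ℕ) :=
  (Fin n → ℝ) → (Fin n → ℝ) → (Fin n → ℝ) → (Fin n → ℝ) → ℝ

/-- Components of the Minkowski metric `diag(-1,1,…,1)` of signature `(-,+,…,+)`.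
Since this matrix is its own inverse, it also gives the components `η^{ab}`
of the inverse metric. -/
def ηm {n : ℕ} (a b : Fin n) : ℝ :=
  if a = b then (if (a : ℕ) = 0 then -1 else 1) else 0

/-- The Minkowski bilinear form `η` of signature `(-,+,…,+)` on `ℝ^n`. -/
def ηf {n : ℕ} (x y : Fin n → ℝ) : ℝ :=
  ∑ i : Fin n, (if (i : ℕ) = 0 then (-1 : ℝ) else 1) * x i * y i

/-- The standard basis `(e_a)` of `ℝ^n`. -/
def stdb {n : ℕ} (a : Fin n) : Fin n → ℝ := fun i => if i = a then 1 else 0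

/-- Multilinearity of a 4-argument map. -/
def Multilinear4 {n : ℕ} (C : Tensor4 n) : Prop :=
  (∀ y z w, IsLinearMap ℝ fun x => C x y z w) ∧
  (∀ x z w, IsLinearMap ℝ fun y => C x y z w) ∧
  (∀ x y w, IsLinearMap ℝ fun z => C x y z w) ∧
  (∀ x y z, IsLinearMap ℝ fun w => C x y z w)

/-- Bilinearity of a 2-argument map. -/
def Bilinear2 {n : ℕ} (S : (Fin n → ℝ) → (Fin n → ℝ) → ℝ) : Prop :=
  (∀ y, IsLinearMap ℝ fun x => S x y) ∧ (∀ x, IsLinearMap ℝ fun y => S x y)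

/-- A generalized curvature tensor: a multilinear map with the algebraic
symmetries of the Riemann tensor (antisymmetry in the first and the last pair,
pair-exchange symmetry, and the first Bianchi identity). -/
def IsGenCurv {n : ℕ} (C : Tensor4 n) : Prop :=
  Multilinear4 C ∧
  (∀ x y z w, C x y z w = - C y x z w) ∧
  (∀ x y z w, C x y z w = - C x y w z) ∧
  (∀ x y z w, C x y z w = C z w x y) ∧
  (∀ x y z w, C x y z w + C y z x w + C z x y w = 0)

/-- Total tracelessness: `Σ_{a,b} η^{ab} C(e_a, x, e_b, y) = 0`. -/
def TotallyTraceless {n : ℕ} (C : Tensor4 n) : Prop :=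
  ∀ x y, (∑ a, ∑ b, ηm a b * C (stdb a) x (stdb b) y) = 0

/-- Weyl compatibility of `C` with the vector `u`. -/
def WeylCompatible {n : ℕ} (C : Tensor4 n) (u : Fin n → ℝ) : Prop :=
  ∀ x y z w,
    ηf u x * C y z w u + ηf u y * C z x w u + ηf u z * C x y w u = 0

/-- The electric part of `C` relative to `u`: `E(x,y) = C(u,x,y,u)`. -/
def electric {n : ℕ} (C : Tensor4 n) (u : Fin n → ℝ)
    (x y : Fin n → ℝ) : ℝ :=
  C u x y u

/-- Full η-self-contraction `T² = Σ T_{abcd} T^{abcd}` of a 4-tensor. -/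
def sq4 {n : ℕ} (T : Tensor4 n) : ℝ :=
  ∑ a, ∑ a', ∑ b, ∑ b', ∑ c, ∑ c', ∑ d, ∑ d',
    ηm a a' * ηm b b' * ηm c c' * ηm d d' *
      T (stdb a) (stdb b) (stdb c) (stdb d) *
      T (stdb a') (stdb b') (stdb c') (stdb d')

/-- Full η-self-contraction `S² = Σ S_{ab} S^{ab}` of a 2-tensor. -/
def sq2 {n : ℕ} (S : (Fin n → ℝ) → (Fin n → ℝ) → ℝ) : ℝ :=
  ∑ a, ∑ a', ∑ b, ∑ b',
    ηm a a' * ηm b b' * S (stdb a) (stdb b) * S (stdb a') (stdb b')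

/-- The tensor `Γ` associated with `C`, its electric part `E`, `u` and `η`. -/
def Γt {n : ℕ} (C : Tensor4 n) (u : Fin n → ℝ) : Tensor4 n :=
  fun x y z w =>
    C x y z w
      - ((n : ℝ) - 2) / ((n : ℝ) - 3) *
          (ηf u x * ηf u w * electric C u y z - ηf u y * ηf u w * electric C u x z
            - ηf u x * ηf u z * electric C u y w + ηf u y * ηf u z * electric C u x w)
      - 1 / ((n : ℝ) - 3) *
          (ηf x w * electric C u y z - ηf y w * electric C u x z
            - ηf x z * electric C u y w + ηf y z * electric C u x w)

/-! ### Auxiliary machinery for stmt_11 -/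

/-- The diagonal entries of the Minkowski metric. -/
def dg {n : ℕ} (a : Fin n) : ℝ := if (a : ℕ) = 0 then -1 else 1

/-- k = (n-2)/(n-3). -/
def kv (n : ℕ) : ℝ := ((n : ℝ) - 2) / ((n : ℝ) - 3)

/-- m = 1/(n-3). -/
def mv (n : ℕ) : ℝ := 1 / ((n : ℝ) - 3)

/-- The 2-tensor `P = k û⊗û + m η` (components). -/
def pp {n : ℕ} (u : Fin n → ℝ) (a b : Fin n) : ℝ :=
  kv n * (dg a * u a) * (dg b * u b) + mv n * ηm a b

/-- The correction tensor `(P ∧ E)` components. -/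
def ww {n : ℕ} (C : Tensor4 n) (u : Fin n → ℝ) (a b c d : Fin n) : ℝ :=
  pp u a d * C u (stdb b) (stdb c) u - pp u b d * C u (stdb a) (stdb c) u
    - pp u a c * C u (stdb b) (stdb d) u + pp u b c * C u (stdb a) (stdb d) u

section Basic

variable {n : ℕ}

lemma dg_sq (a : Fin n) : dg a * dg a = 1 := by
  unfold dg; split <;> norm_num

lemma ηm_eq2 (a b : Fin n) : ηm a b = if a = b then dg a else 0 := rfl

lemma ηm_comm (a b : Fin n) : ηm a b = ηm b a := by
  unfold ηm; rcases eq_or_ne a b with h | h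
  · subst h; rfl
  · simp [h, h.symm]

lemma sum_ηm (a : Fin n) (f : Fin n → ℝ) : ∑ b, ηm a b * f b = dg a * f a := by
  simp [ηm_eq2, ite_mul, Finset.sum_ite_eq]

lemma sum_dgηm (x : Fin n) (f : Fin n → ℝ) :
    ∑ d, dg d * (ηm x d * f d) = f x := by
  have h : ∀ d, dg d * (ηm x d * f d) = ηm x d * (dg d * f d) := fun d => by ring
  simp only [h, sum_ηm]
  rw [← mul_assoc, dg_sq, one_mul]

lemma sum_dgηm2 (x : Fin n) (f : Fin n → ℝ) :
    ∑ d, dg d * (ηm d x * f d) = f x := by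
  have h : ∀ d, dg d * (ηm d x * f d) = dg d * (ηm x d * f d) := fun d => by
    rw [ηm_comm x d]
  simp only [h, sum_dgηm]

lemma sum_ηm_u (x : Fin n) (u : Fin n → ℝ) : ∑ d, ηm x d * u d = dg x * u x :=
  sum_ηm x u

lemma expand_lin {f : (Fin n → ℝ) → ℝ} (hf : IsLinearMap ℝ f) (x : Fin n → ℝ) :
    f x = ∑ a, x a * f (stdb a) := by
  have hx : x = ∑ a, x a • stdb a := by
    funext i
    simp [stdb, Finset.sum_apply, Finset.sum_ite_eq]
  nth_rewrite 1 [hx]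
  show (IsLinearMap.mk' f hf) (∑ a, x a • stdb a) = _
  rw [map_sum]
  refine Finset.sum_congr rfl fun a _ => ?_
  show (IsLinearMap.mk' f hf) (x a • stdb a) = _
  rw [map_smul]
  rfl

lemma ηf_stdb_right (x : Fin n → ℝ) (a : Fin n) : ηf x (stdb a) = dg a * x a := by
  simp [ηf, stdb, dg, mul_ite, Finset.sum_ite_eq, mul_comm]

lemma ηf_stdb_stdb (a b : Fin n) : ηf (stdb a) (stdb b) = ηm a b := by
  simp only [ηf, stdb, ηm]
  rcases eq_or_ne a b with h | h
  · subst h; simp [ite_mul, Finset.sum_ite_eq]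
  · rw [Finset.sum_eq_zero]
    · simp [h]
    · intro i _
      rcases eq_or_ne i a with h1 | h1 <;> rcases eq_or_ne i b with h2 | h2 <;>
        simp_all

lemma sq2_eq (S : (Fin n → ℝ) → (Fin n → ℝ) → ℝ) :
    sq2 S = ∑ a, ∑ b, dg a * dg b * (S (stdb a) (stdb b) * S (stdb a) (stdb b)) := by
  unfold sq2
  simp only [ηm_eq2]
  simp only [ite_mul, zero_mul, mul_ite, mul_zero, Finset.sum_ite_irrel,
    Finset.sum_ite_eq, Finset.mem_univ, if_true, Finset.sum_const_zero]
  refine Finset.sum_congr rfl fun a _ => Finset.sum_congr rfl fun b _ => by ring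

lemma sq4_eq (T : Tensor4 n) :
    sq4 T = ∑ a, ∑ b, ∑ c, ∑ d, dg a * dg b * dg c * dg d *
      (T (stdb a) (stdb b) (stdb c) (stdb d) * T (stdb a) (stdb b) (stdb c) (stdb d)) := by
  unfold sq4
  simp only [ηm_eq2]
  simp only [ite_mul, zero_mul, mul_ite, mul_zero, Finset.sum_ite_irrel,
    Finset.sum_ite_eq, Finset.mem_univ, if_true, Finset.sum_const_zero]
  refine Finset.sum_congr rfl fun a _ => Finset.sum_congr rfl fun b _ =>
    Finset.sum_congr rfl fun c _ => Finset.sum_congr rfl fun d _ => by ring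

lemma comm_bcad (F : Fin n → Fin n → Fin n → Fin n → ℝ) :
    (∑ a, ∑ b, ∑ c, ∑ d, F a b c d) = ∑ b, ∑ c, ∑ a, ∑ d, F a b c d := by
  rw [Finset.sum_comm]
  exact Finset.sum_congr rfl fun b _ => Finset.sum_comm

lemma swap12 (F : Fin n → Fin n → Fin n → Fin n → ℝ) :
    (∑ a, ∑ b, ∑ c, ∑ d, F a b c d) = ∑ a, ∑ b, ∑ c, ∑ d, F b a c d :=
  Finset.sum_comm

lemma swap34 (F : Fin n → Fin n → Fin n → Fin n → ℝ) :
    (∑ a, ∑ b, ∑ c, ∑ d, F a b c d) = ∑ a, ∑ b, ∑ c, ∑ d, F a b d c :=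
  Finset.sum_congr rfl fun a _ => Finset.sum_congr rfl fun b _ => Finset.sum_comm

lemma swapboth (F : Fin n → Fin n → Fin n → Fin n → ℝ) :
    (∑ a, ∑ b, ∑ c, ∑ d, F a b c d) = ∑ a, ∑ b, ∑ c, ∑ d, F b a d c :=
  (swap12 F).trans (swap34 fun a b c d => F b a c d)

lemma neg4 (F : Fin n → Fin n → Fin n → Fin n → ℝ) :
    (∑ a, ∑ b, ∑ c, ∑ d, -F a b c d) = -∑ a, ∑ b, ∑ c, ∑ d, F a b c d := by
  simp

lemma pull (X : Fin n → Fin n → Fin n → Fin n → ℝ) (q r : Fin n → Fin n → ℝ) :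
    (∑ a, ∑ b, ∑ c, ∑ d, dg a * dg b * dg c * dg d * (X a b c d * (q a d * r b c)))
      = ∑ b, ∑ c, dg b * dg c * r b c *
          (∑ a, ∑ d, dg a * dg d * q a d * X a b c d) := by
  rw [comm_bcad]
  refine Finset.sum_congr rfl fun b _ => Finset.sum_congr rfl fun c _ => ?_
  rw [Finset.mul_sum]
  refine Finset.sum_congr rfl fun a _ => ?_
  rw [Finset.mul_sum]
  exact Finset.sum_congr rfl fun d _ => by ring

lemma kmid {n : ℕ} (hn : 4 ≤ n) :
    kv n * kv n - 2 * kv n * mv n + ((n : ℝ) - 2) * (mv n * mv n) = kv n := by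
  have h4 : (4 : ℝ) ≤ (n : ℝ) := by exact_mod_cast hn
  have h3 : ((n : ℝ) - 3) ≠ 0 := by intro h; linarith
  unfold kv mv
  field_simp
  ring

end Basic

section Curv

variable {n : ℕ} {C : Tensor4 n} {u : Fin n → ℝ}

/-- Expand slot 1 of C over the basis. -/
lemma cexp1 (hC : IsGenCurv C) (y z w : Fin n → ℝ) :
    ∑ a, u a * C (stdb a) y z w = C u y z w :=
  (expand_lin (hC.1.1 y z w) u).symm

lemma cexp2 (hC : IsGenCurv C) (x z w : Fin n → ℝ) :
    ∑ a, u a * C x (stdb a) z w = C x u z w :=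
  (expand_lin (hC.1.2.1 x z w) u).symm

lemma cexp3 (hC : IsGenCurv C) (x y w : Fin n → ℝ) :
    ∑ a, u a * C x y (stdb a) w = C x y u w :=
  (expand_lin (hC.1.2.2.1 x y w) u).symm

lemma cexp4 (hC : IsGenCurv C) (x y z : Fin n → ℝ) :
    ∑ a, u a * C x y z (stdb a) = C x y z u :=
  (expand_lin (hC.1.2.2.2 x y z) u).symm

/-- `Σ_a η^{aa} C(e_a, x, e_a, y) = 0`. -/
lemma tr_diag (htr : TotallyTraceless C) (x y : Fin n → ℝ) :
    ∑ a, dg a * C (stdb a) x (stdb a) y = 0 := by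
  have h := htr x y
  rw [← h]
  exact Finset.sum_congr rfl fun a _ => (sum_ηm a fun b => C (stdb a) x (stdb b) y).symm

/-- trace of the electric part vanishes -/
lemma tr_ee (hC : IsGenCurv C) (htr : TotallyTraceless C) :
    ∑ a, dg a * C u (stdb a) (stdb a) u = 0 := by
  have h : ∀ a : Fin n, C u (stdb a) (stdb a) u = -C (stdb a) u (stdb a) u := by
    intro a
    have e3 := hC.2.2.2.1 (stdb a) u u (stdb a)
    have e2 := hC.2.2.1 (stdb a) u (stdb a) u
    linarith
  have h2 : ∀ a : Fin n, dg a * C u (stdb a) (stdb a) u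
      = -(dg a * C (stdb a) u (stdb a) u) := fun a => by rw [h a]; ring
  simp only [h2]
  rw [Finset.sum_neg_distrib, tr_diag htr, neg_zero]

/-- E u = 0 (first slot). -/
lemma euL (hC : IsGenCurv C) (c : Fin n) :
    ∑ a, u a * C u (stdb a) (stdb c) u = 0 := by
  rw [cexp2 hC]
  have := hC.2.1 u u (stdb c) u
  linarith

/-- E u = 0 (second slot). -/
lemma euR (hC : IsGenCurv C) (b : Fin n) :
    ∑ c, u c * C u (stdb b) (stdb c) u = 0 := by
  rw [cexp3 hC]
  have := hC.2.2.1 u (stdb b) u u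
  linarith

/-- `ηf u u` in our normal form. -/
lemma hu' (hu : ηf u u = -1) : ∑ d, dg d * (u d * u d) = -1 := by
  rw [← hu]
  unfold ηf
  exact Finset.sum_congr rfl fun i _ => by unfold dg; ring

end Curv

section Contr

variable {n : ℕ} {C : Tensor4 n} {u : Fin n → ℝ}

/-- Contraction of `C` with `P` over slots 1 and 4 gives `k E`. -/
lemma K1 (hC : IsGenCurv C) (htr : TotallyTraceless C) (b c : Fin n) :
    (∑ a, ∑ d, dg a * dg d * pp u a d * C (stdb a) (stdb b) (stdb c) (stdb d))
      = kv n * C u (stdb b) (stdb c) u := by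
  have hpt : ∀ a d : Fin n,
      dg a * dg d * pp u a d * C (stdb a) (stdb b) (stdb c) (stdb d)
        = kv n * (u a * (u d * C (stdb a) (stdb b) (stdb c) (stdb d)))
          + mv n * (dg d * (ηm a d * (dg a * C (stdb a) (stdb b) (stdb c) (stdb d)))) := by
    intro a d
    have h1 := dg_sq a
    have h2 := dg_sq d
    unfold pp
    linear_combination (kv n * (u a * (u d * (C (stdb a) (stdb b) (stdb c) (stdb d)
        * (dg a * dg a))))) * h2
      + (kv n * (u a * (u d * C (stdb a) (stdb b) (stdb c) (stdb d)))) * h1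
  simp only [hpt, Finset.sum_add_distrib, ← Finset.mul_sum, sum_dgηm]
  have h4 : ∀ a : Fin n, (∑ d, u d * C (stdb a) (stdb b) (stdb c) (stdb d))
      = C (stdb a) (stdb b) (stdb c) u := fun a => cexp4 hC _ _ _
  simp only [h4, cexp1 hC]
  have h5 : ∀ a : Fin n, dg a * C (stdb a) (stdb b) (stdb c) (stdb a)
      = -(dg a * C (stdb a) (stdb b) (stdb a) (stdb c)) := by
    intro a
    have := hC.2.2.1 (stdb a) (stdb b) (stdb c) (stdb a)
    rw [this]; ring
  simp only [h5]
  rw [Finset.sum_neg_distrib, tr_diag htr]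
  ring

/-- Generic contraction of `P` against the last index. -/
lemma pC (a : Fin n) (f : Fin n → ℝ) :
    ∑ d, dg d * pp u a d * f d
      = kv n * ((dg a * u a) * ∑ d, u d * f d) + mv n * f a := by
  have hpt : ∀ d : Fin n, dg d * pp u a d * f d
      = kv n * ((dg a * u a) * (u d * f d)) + mv n * (dg d * (ηm a d * f d)) := by
    intro d
    have h2 := dg_sq d
    unfold pp
    linear_combination (kv n * ((dg a * u a) * (u d * f d))) * h2
  simp only [hpt, Finset.sum_add_distrib, ← Finset.mul_sum, sum_dgηm]

/-- `P` contracted with `u`. -/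
lemma pU (hu : ηf u u = -1) (x : Fin n) :
    ∑ d, u d * pp u x d = (mv n - kv n) * (dg x * u x) := by
  have hpt : ∀ d : Fin n, u d * pp u x d
      = kv n * ((dg x * u x) * (dg d * (u d * u d))) + mv n * (ηm x d * u d) := by
    intro d; unfold pp; ring
  simp only [hpt, Finset.sum_add_distrib, ← Finset.mul_sum, sum_ηm, hu' hu]
  ring

end Contr

section ContrW

variable {n : ℕ} {C : Tensor4 n} {u : Fin n → ℝ}

/-- `w` contracted with `u` in the last slot. -/
lemma SaEq (hC : IsGenCurv C) (hu : ηf u u = -1) (a b c : Fin n) :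
    ∑ d, u d * ww C u a b c d
      = (mv n - kv n) * ((dg a * u a) * C u (stdb b) (stdb c) u
          - (dg b * u b) * C u (stdb a) (stdb c) u) := by
  have hpt : ∀ d : Fin n, u d * ww C u a b c d
      = (u d * pp u a d) * C u (stdb b) (stdb c) u
        - (u d * pp u b d) * C u (stdb a) (stdb c) u
        - pp u a c * (u d * C u (stdb b) (stdb d) u)
        + pp u b c * (u d * C u (stdb a) (stdb d) u) := by
    intro d; unfold ww; ring
  simp only [hpt, Finset.sum_add_distrib, Finset.sum_sub_distrib,
    ← Finset.sum_mul, ← Finset.mul_sum]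
  rw [pU hu, pU hu, euR hC, euR hC]
  ring

/-- The `η`-trace of `w` over slots 1 and 4. -/
lemma WdiagEq (hC : IsGenCurv C) (htr : TotallyTraceless C) (hu : ηf u u = -1)
    (b c : Fin n) :
    ∑ a, dg a * ww C u a b c a
      = (mv n * ((n : ℝ) - 2) - kv n) * C u (stdb b) (stdb c) u := by
  have hpt : ∀ a : Fin n, dg a * ww C u a b c a
      = (kv n * (dg a * (u a * u a)) + mv n) * C u (stdb b) (stdb c) u
        - (kv n * ((dg b * u b) * (u a * C u (stdb a) (stdb c) u))
            + mv n * (dg a * (ηm a b * C u (stdb a) (stdb c) u)))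
        - (kv n * ((dg c * u c) * (u a * C u (stdb b) (stdb a) u))
            + mv n * (dg a * (ηm a c * C u (stdb b) (stdb a) u)))
        + pp u b c * (dg a * C u (stdb a) (stdb a) u) := by
    intro a
    have h1 := dg_sq a
    unfold ww pp
    rw [show ηm a a = dg a by simp [ηm_eq2], ηm_comm a b]
    linear_combination (kv n * ((dg a * (u a * u a)) * C u (stdb b) (stdb c) u)
        + mv n * C u (stdb b) (stdb c) u
        - kv n * ((dg b * u b) * (u a * C u (stdb a) (stdb c) u))
        - kv n * ((dg c * u c) * (u a * C u (stdb b) (stdb a) u))) * h1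
  simp only [hpt, Finset.sum_add_distrib, Finset.sum_sub_distrib,
    ← Finset.sum_mul, ← Finset.mul_sum, sum_dgηm2, sum_dgηm]
  rw [hu' hu, euL hC, euR hC, tr_ee hC htr]
  simp only [Finset.sum_const, Finset.card_univ, Fintype.card_fin, nsmul_eq_mul,
    mul_zero, zero_mul, add_zero, zero_add, sub_zero]
  ring

end ContrW

section KwSec

variable {n : ℕ} {C : Tensor4 n} {u : Fin n → ℝ}

/-- Contraction of `w` with `P` over slots 1 and 4 gives `k E`. -/
lemma Kw (hn : 4 ≤ n) (hC : IsGenCurv C) (htr : TotallyTraceless C)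
    (hu : ηf u u = -1) (b c : Fin n) :
    (∑ a, ∑ d, dg a * dg d * pp u a d * ww C u a b c d)
      = kv n * C u (stdb b) (stdb c) u := by
  have h1 : ∀ a : Fin n, (∑ d, dg a * dg d * pp u a d * ww C u a b c d)
      = dg a * (kv n * ((dg a * u a) * ∑ d, u d * ww C u a b c d)
          + mv n * ww C u a b c a) := by
    intro a
    rw [← pC a (fun d => ww C u a b c d)]
    rw [Finset.mul_sum]
    exact Finset.sum_congr rfl fun d _ => by ring
  simp only [h1, SaEq hC hu]
  have hpt2 : ∀ a : Fin n,
      dg a * (kv n * ((dg a * u a) * ((mv n - kv n)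
          * ((dg a * u a) * C u (stdb b) (stdb c) u
              - (dg b * u b) * C u (stdb a) (stdb c) u)))
        + mv n * ww C u a b c a)
      = (kv n * (mv n - kv n)) * ((dg a * (u a * u a)) * C u (stdb b) (stdb c) u)
        - (kv n * (mv n - kv n)) * ((dg b * u b) * (u a * C u (stdb a) (stdb c) u))
        + mv n * (dg a * ww C u a b c a) := by
    intro a
    have h := dg_sq a
    linear_combination (kv n * ((mv n - kv n) * (dg a * (u a * u a)
        * C u (stdb b) (stdb c) u
        - u a * ((dg b * u b) * C u (stdb a) (stdb c) u)))) * h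
  simp only [hpt2, Finset.sum_add_distrib, Finset.sum_sub_distrib,
    ← Finset.mul_sum, ← Finset.sum_mul]
  rw [hu' hu, euL hC, WdiagEq hC htr hu]
  have hk := kmid hn
  linear_combination C u (stdb b) (stdb c) u * hk

end KwSec

section Sym

variable {n : ℕ}

lemma ww_swap12 (C : Tensor4 n) (u : Fin n → ℝ) (a b c d : Fin n) :
    ww C u b a c d = -ww C u a b c d := by unfold ww; ring

lemma ww_swap34 (C : Tensor4 n) (u : Fin n → ℝ) (a b c d : Fin n) :
    ww C u a b d c = -ww C u a b c d := by unfold ww; ring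

/-- Generic evaluation of the full contraction of a tensor `X` with
antisymmetries against a Kulkarni–Nomizu-type product. -/
lemma contract_ww (X Y : Fin n → Fin n → Fin n → Fin n → ℝ)
    (E q : Fin n → Fin n → ℝ) (v : ℝ)
    (hY : ∀ a b c d, Y a b c d
      = q a d * E b c - q b d * E a c - q a c * E b d + q b c * E a d)
    (hX12 : ∀ a b c d, X b a c d = -X a b c d)
    (hX34 : ∀ a b c d, X a b d c = -X a b c d)
    (hK : ∀ b c, (∑ a, ∑ d, dg a * dg d * q a d * X a b c d) = v * E b c) :
    (∑ a, ∑ b, ∑ c, ∑ d, dg a * dg b * dg c * dg d * (X a b c d * Y a b c d))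
      = 4 * v * ∑ b, ∑ c, dg b * dg c * (E b c * E b c) := by
  have hexp : ∀ a b c d, dg a * dg b * dg c * dg d * (X a b c d * Y a b c d)
      = dg a * dg b * dg c * dg d * (X a b c d * (q a d * E b c))
        - dg a * dg b * dg c * dg d * (X a b c d * (q b d * E a c))
        - dg a * dg b * dg c * dg d * (X a b c d * (q a c * E b d))
        + dg a * dg b * dg c * dg d * (X a b c d * (q b c * E a d)) := by
    intro a b c d; rw [hY]; ring
  simp only [hexp, Finset.sum_add_distrib, Finset.sum_sub_distrib]
  have hA1 : (∑ a, ∑ b, ∑ c, ∑ d,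
        dg a * dg b * dg c * dg d * (X a b c d * (q a d * E b c)))
      = v * ∑ b, ∑ c, dg b * dg c * (E b c * E b c) := by
    rw [pull, Finset.mul_sum]
    refine Finset.sum_congr rfl fun b _ => ?_
    rw [Finset.mul_sum]
    refine Finset.sum_congr rfl fun c _ => ?_
    rw [hK]; ring
  have hA2 : (∑ a, ∑ b, ∑ c, ∑ d,
        dg a * dg b * dg c * dg d * (X a b c d * (q b d * E a c)))
      = -(v * ∑ b, ∑ c, dg b * dg c * (E b c * E b c)) := by
    rw [swap12 (fun a b c d => dg a * dg b * dg c * dg d * (X a b c d * (q b d * E a c)))]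
    rw [← hA1, ← neg4]
    refine Finset.sum_congr rfl fun a _ => Finset.sum_congr rfl fun b _ =>
      Finset.sum_congr rfl fun c _ => Finset.sum_congr rfl fun d _ => ?_
    rw [hX12]; ring
  have hA3 : (∑ a, ∑ b, ∑ c, ∑ d,
        dg a * dg b * dg c * dg d * (X a b c d * (q a c * E b d)))
      = -(v * ∑ b, ∑ c, dg b * dg c * (E b c * E b c)) := by
    rw [swap34 (fun a b c d => dg a * dg b * dg c * dg d * (X a b c d * (q a c * E b d)))]
    rw [← hA1, ← neg4]
    refine Finset.sum_congr rfl fun a _ => Finset.sum_congr rfl fun b _ =>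
      Finset.sum_congr rfl fun c _ => Finset.sum_congr rfl fun d _ => ?_
    rw [hX34]; ring
  have hA4 : (∑ a, ∑ b, ∑ c, ∑ d,
        dg a * dg b * dg c * dg d * (X a b c d * (q b c * E a d)))
      = v * ∑ b, ∑ c, dg b * dg c * (E b c * E b c) := by
    rw [swapboth (fun a b c d => dg a * dg b * dg c * dg d * (X a b c d * (q b c * E a d)))]
    rw [← hA1]
    refine Finset.sum_congr rfl fun a _ => Finset.sum_congr rfl fun b _ =>
      Finset.sum_congr rfl fun c _ => Finset.sum_congr rfl fun d _ => ?_
    rw [hX34, hX12]; ring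
  rw [hA1, hA2, hA3, hA4]
  ring

end Sym

section Gamma

variable {n : ℕ}

lemma Γcomp (C : Tensor4 n) (u : Fin n → ℝ) (a b c d : Fin n) :
    Γt C u (stdb a) (stdb b) (stdb c) (stdb d)
      = C (stdb a) (stdb b) (stdb c) (stdb d) - ww C u a b c d := by
  unfold Γt ww pp kv mv electric
  rw [ηf_stdb_right u a, ηf_stdb_right u b, ηf_stdb_right u c, ηf_stdb_right u d,
    ηf_stdb_stdb a d, ηf_stdb_stdb b d, ηf_stdb_stdb a c, ηf_stdb_stdb b c]
  ring

end Gamma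


/-- for `n ≥ 4`, a totally traceless generalized curvature tensor
`C` on Minkowski `ℝ^n` Weyl compatible with a unit timelike `u`,
`Γ² = C² − 4·((n−2)/(n−3))·E²`. -/
theorem stmt_11 {n : ℕ} (hn : 4 ≤ n) (C : Tensor4 n)
    (hC : IsGenCurv C) (htr : TotallyTraceless C)
    (u : Fin n → ℝ) (hu : ηf u u = -1) (hW : WeylCompatible C u) :
    sq4 (Γt C u)
      = sq4 C - 4 * (((n : ℝ) - 2) / ((n : ℝ) - 3)) * sq2 (electric C u) := by
  have hcw : (∑ a, ∑ b, ∑ c, ∑ d, dg a * dg b * dg c * dg d *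
      (C (stdb a) (stdb b) (stdb c) (stdb d) * ww C u a b c d))
      = 4 * kv n * ∑ b, ∑ c, dg b * dg c *
          (C u (stdb b) (stdb c) u * C u (stdb b) (stdb c) u) := by
    refine contract_ww (fun a b c d => C (stdb a) (stdb b) (stdb c) (stdb d))
      (fun a b c d => ww C u a b c d) (fun b c => C u (stdb b) (stdb c) u)
      (fun a d => pp u a d) (kv n) (fun a b c d => rfl) ?_ ?_ (K1 hC htr)
    · intro a b c d
      have := hC.2.1 (stdb a) (stdb b) (stdb c) (stdb d)
      linarith
    · intro a b c d
      have := hC.2.2.1 (stdb a) (stdb b) (stdb c) (stdb d)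
      linarith
  have hww : (∑ a, ∑ b, ∑ c, ∑ d, dg a * dg b * dg c * dg d *
      (ww C u a b c d * ww C u a b c d))
      = 4 * kv n * ∑ b, ∑ c, dg b * dg c *
          (C u (stdb b) (stdb c) u * C u (stdb b) (stdb c) u) :=
    contract_ww (fun a b c d => ww C u a b c d)
      (fun a b c d => ww C u a b c d) (fun b c => C u (stdb b) (stdb c) u)
      (fun a d => pp u a d) (kv n) (fun a b c d => rfl)
      (ww_swap12 C u) (ww_swap34 C u) (Kw hn hC htr hu)
  have hsq2 : sq2 (electric C u)
      = ∑ b, ∑ c, dg b * dg c * (C u (stdb b) (stdb c) u * C u (stdb b) (stdb c) u) := by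
    rw [sq2_eq]; rfl
  rw [sq4_eq (Γt C u)]
  simp only [Γcomp]
  have hsplit : ∀ p q r s x y : ℝ, p * q * r * s * ((x - y) * (x - y))
      = p * q * r * s * (x * x) - 2 * (p * q * r * s * (x * y))
        + p * q * r * s * (y * y) := by intros; ring
  simp only [hsplit, Finset.sum_add_distrib, Finset.sum_sub_distrib, ← Finset.mul_sum]
  rw [hcw, hww, ← sq4_eq C, hsq2]
  unfold kv
  ring
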